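/- Let D be the unique ℚ-linear derivation of the polynomial ring ℚ[x,y] satisfying D(x) = xy and D(y) = x². Then for every n ≥ 0, D^n(x) = Σ_T x^{m_e(T)} y^{m_o(T)}, where the sum runs over all increasing trees T on [n], m_e(T) is the number of vertices of T of even degree, and m_o(T) is the number of vertices of T of odd degree. -/

import Mathlib

open MvPolynomial

/-- `deg p v` is the number of children of vertex `v` in the increasing tree on
`{0,1,…,n}` encoded by the parent function `p` (vertex `i+1` has parent `p i`). -/
def deg {n : ℕ} (p : Fin n → Fin (n + 1)) (v : Fin (n + 1)) : ℕ :=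
  (Finset.univ.filter fun i => p i = v).card

/-- The parent function encodes an increasing tree: each vertex's parent has a smaller
label. -/
def IsIncreasingTree {n : ℕ} (p : Fin n → Fin (n + 1)) : Prop :=
  ∀ i : Fin n, (p i : ℕ) ≤ (i : ℕ)

instance {n : ℕ} : DecidablePred (fun p : Fin n → Fin (n + 1) => IsIncreasingTree p) :=
  fun p => inferInstanceAs (Decidable (∀ i : Fin n, (p i : ℕ) ≤ (i : ℕ)))

/-- Extend a tree on `{0,…,n}` by attaching vertex `n+1` to vertex `w`. -/
def extTree {n : ℕ} (p : Fin n → Fin (n + 1)) (w : Fin (n + 1)) :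
    Fin (n + 1) → Fin (n + 2) :=
  Fin.snoc (fun i => (p i).castSucc) w.castSucc

def shrinkTree {n : ℕ} (p' : Fin (n + 1) → Fin (n + 2)) : Fin n → Fin (n + 1) :=
  fun i => if h : (p' i.castSucc : ℕ) < n + 1 then ⟨_, h⟩ else 0

def lastParent {n : ℕ} (p' : Fin (n + 1) → Fin (n + 2)) : Fin (n + 1) :=
  if h : (p' (Fin.last n) : ℕ) < n + 1 then ⟨_, h⟩ else 0

lemma extTree_inc {n : ℕ} {p : Fin n → Fin (n + 1)} (hp : IsIncreasingTree p)
    (w : Fin (n + 1)) : IsIncreasingTree (extTree p w) := by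
  intro i
  refine Fin.lastCases ?_ ?_ i
  · simp [extTree, Fin.snoc_last]
    exact Nat.lt_succ_iff.mp w.isLt
  · intro j
    simpa [extTree, Fin.snoc_castSucc] using hp j

lemma shrink_extTree {n : ℕ} (p : Fin n → Fin (n + 1)) (w : Fin (n + 1)) :
    shrinkTree (extTree p w) = p := by
  funext i
  simp only [shrinkTree, extTree, Fin.snoc_castSucc]
  rw [dif_pos]
  · exact Fin.ext rfl
  · exact (p i).isLt

lemma lastParent_extTree {n : ℕ} (p : Fin n → Fin (n + 1)) (w : Fin (n + 1)) :
    lastParent (extTree p w) = w := by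
  simp only [lastParent, extTree, Fin.snoc_last]
  rw [dif_pos]
  · exact Fin.ext rfl
  · exact w.isLt

lemma extTree_shrink {n : ℕ} {p' : Fin (n + 1) → Fin (n + 2)}
    (hp : IsIncreasingTree p') : extTree (shrinkTree p') (lastParent p') = p' := by
  funext i
  refine Fin.lastCases ?_ ?_ i
  · simp only [extTree, Fin.snoc_last, lastParent]
    have h : (p' (Fin.last n) : ℕ) < n + 1 :=
      lt_of_le_of_lt (hp (Fin.last n)) (Nat.lt_succ_self n)
    rw [dif_pos h]
    exact Fin.ext rfl
  · intro j
    simp only [extTree, Fin.snoc_castSucc, shrinkTree]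
    have h : (p' j.castSucc : ℕ) < n + 1 := by
      have := hp j.castSucc
      have hj := j.isLt
      simp only [Fin.coe_castSucc] at this
      omega
    rw [dif_pos h]
    exact Fin.ext rfl

lemma shrink_inc {n : ℕ} {p' : Fin (n + 1) → Fin (n + 2)}
    (hp : IsIncreasingTree p') : IsIncreasingTree (shrinkTree p') := by
  intro i
  simp only [shrinkTree]
  have h : (p' i.castSucc : ℕ) < n + 1 := by
    have := hp i.castSucc
    have hi := i.isLt
    simp only [Fin.coe_castSucc] at this
    omega
  rw [dif_pos h]
  simpa using hp i.castSucc

lemma deg_extTree_last {n : ℕ} (p : Fin n → Fin (n + 1)) (w : Fin (n + 1)) :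
    deg (extTree p w) (Fin.last (n + 1)) = 0 := by
  rw [deg, Finset.card_eq_zero, Finset.filter_eq_empty_iff]
  intro i _
  refine Fin.lastCases ?_ ?_ i
  · rw [extTree, Fin.snoc_last]
    exact (Fin.castSucc_lt_last w).ne
  · intro j
    rw [extTree, Fin.snoc_castSucc]
    exact (Fin.castSucc_lt_last (p j)).ne

lemma deg_extTree_castSucc {n : ℕ} (p : Fin n → Fin (n + 1)) (w v : Fin (n + 1)) :
    deg (extTree p w) v.castSucc = deg p v + if w = v then 1 else 0 := by
  rw [deg, deg, Finset.card_filter, Finset.card_filter]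
  simp only [deg, Finset.card_filter, Fin.sum_univ_castSucc, extTree,
    Fin.snoc_castSucc, Fin.snoc_last, Fin.castSucc_inj]

/-- number of even-degree vertices of the extended tree. -/
lemma card_even_extTree {n : ℕ} (p : Fin n → Fin (n + 1)) (w : Fin (n + 1)) :
    (Finset.univ.filter fun u => Even (deg (extTree p w) u)).card =
      if Even (deg p w) then (Finset.univ.filter fun v => Even (deg p v)).card
      else (Finset.univ.filter fun v => Even (deg p v)).card + 2 := by
  have key : ∀ P : ℕ → Prop, ∀ inst : DecidablePred P,
      (∑ v : Fin (n + 1), if P (deg (extTree p w) v.castSucc) then 1 else 0) =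
      (if P (deg p w + 1) then 1 else 0) +
        ∑ v ∈ Finset.univ.erase w, (if P (deg p v) then 1 else 0) := by
    intro P inst
    rw [← Finset.add_sum_erase _ _ (Finset.mem_univ w)]
    congr 1
    · rw [deg_extTree_castSucc, if_pos rfl]
    · refine Finset.sum_congr rfl fun v hv => ?_
      rw [deg_extTree_castSucc, if_neg (Finset.ne_of_mem_erase hv).symm, Nat.add_zero]
  have base : ∀ P : ℕ → Prop, ∀ inst : DecidablePred P,
      (Finset.univ.filter fun v => P (deg p v)).card =
      (if P (deg p w) then 1 else 0) +
        ∑ v ∈ Finset.univ.erase w, (if P (deg p v) then 1 else 0) := by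
    intro P inst
    rw [Finset.card_filter, ← Finset.add_sum_erase _ _ (Finset.mem_univ w)]
  rw [Finset.card_filter, Fin.sum_univ_castSucc, deg_extTree_last,
    key _ _, base _ _]
  by_cases hw : Even (deg p w)
  · have h1 : ¬ Even (deg p w + 1) := by simp [Nat.even_add_one, hw]
    simp [hw, h1]
    omega
  · have h1 : Even (deg p w + 1) := Nat.even_add_one.mpr hw
    simp [hw, h1]
    omega

lemma card_odd_extTree {n : ℕ} (p : Fin n → Fin (n + 1)) (w : Fin (n + 1)) :
    (Finset.univ.filter fun u => ¬ Even (deg (extTree p w) u)).card + 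
      (if Even (deg p w) then 0 else 1) =
      (Finset.univ.filter fun v => ¬ Even (deg p v)).card +
      (if Even (deg p w) then 1 else 0) := by
  have key :
      (∑ v : Fin (n + 1), if ¬ Even (deg (extTree p w) v.castSucc) then 1 else 0) =
      (if ¬ Even (deg p w + 1) then 1 else 0) +
        ∑ v ∈ Finset.univ.erase w, (if ¬ Even (deg p v) then 1 else 0) := by
    rw [← Finset.add_sum_erase _ _ (Finset.mem_univ w)]
    congr 1
    · rw [deg_extTree_castSucc, if_pos rfl]
    · refine Finset.sum_congr rfl fun v hv => ?_
      rw [deg_extTree_castSucc, if_neg (Finset.ne_of_mem_erase hv).symm, Nat.add_zero]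
  have base :
      (Finset.univ.filter fun v => ¬ Even (deg p v)).card =
      (if ¬ Even (deg p w) then 1 else 0) +
        ∑ v ∈ Finset.univ.erase w, (if ¬ Even (deg p v) then 1 else 0) := by
    rw [Finset.card_filter, ← Finset.add_sum_erase _ _ (Finset.mem_univ w)]
  rw [Finset.card_filter, Fin.sum_univ_castSucc, deg_extTree_last, key, base]
  by_cases hw : Even (deg p w)
  · have h1 : ¬ Even (deg p w + 1) := by simp [Nat.even_add_one, hw]
    simp [hw, h1]
    omega
  · have h1 : Even (deg p w + 1) := Nat.even_add_one.mpr hw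
    simp [hw, h1]
    omega

/-- Derivation of a monomial. -/
lemma D_mono
    (D : Derivation ℚ (MvPolynomial (Fin 2) ℚ) (MvPolynomial (Fin 2) ℚ))
    (hx : D (X 0) = X 0 * X 1) (hy : D (X 1) = X 0 ^ 2) (a b : ℕ) (ha : 1 ≤ a) :
    D (X 0 ^ a * X 1 ^ b) =
      a • (X 0 ^ a * X 1 ^ (b + 1)) + b • (X 0 ^ (a + 2) * X 1 ^ (b - 1)) := by
  obtain ⟨a', rfl⟩ : ∃ a', a = a' + 1 := ⟨a - 1, by omega⟩
  rcases b with _ | b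
  · rw [Derivation.leibniz, Derivation.leibniz_pow, Derivation.leibniz_pow, hx, hy]
    simp only [Nat.add_sub_cancel, smul_eq_mul, nsmul_eq_mul, Nat.zero_sub, pow_zero,
      Nat.cast_zero, zero_mul, mul_zero, add_zero, mul_one, one_mul, zero_add,
      Nat.cast_add, Nat.cast_one, pow_one]
    ring
  · rw [Derivation.leibniz, Derivation.leibniz_pow, Derivation.leibniz_pow, hx, hy]
    simp only [Nat.add_sub_cancel, smul_eq_mul, nsmul_eq_mul, Nat.cast_add,
      Nat.cast_one]
    ring

lemma deg_last_eq_zero {n : ℕ} {p : Fin n → Fin (n + 1)} (hp : IsIncreasingTree p) :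
    deg p (Fin.last n) = 0 := by
  rw [deg, Finset.card_eq_zero, Finset.filter_eq_empty_iff]
  intro i _ h
  have := hp i
  rw [h] at this
  exact absurd (lt_of_le_of_lt this i.isLt) (by simp)

lemma one_le_card_even {n : ℕ} {p : Fin n → Fin (n + 1)} (hp : IsIncreasingTree p) :
    1 ≤ (Finset.univ.filter fun v => Even (deg p v)).card := by
  rw [Nat.one_le_iff_ne_zero, ← Nat.pos_iff_ne_zero, Finset.card_pos]
  exact ⟨Fin.last n, by simp [deg_last_eq_zero hp]⟩

theorem stmt18
    (D : Derivation ℚ (MvPolynomial (Fin 2) ℚ) (MvPolynomial (Fin 2) ℚ))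
    (hx : D (X 0) = X 0 * X 1) (hy : D (X 1) = X 0 ^ 2) (n : ℕ) :
    (⇑D)^[n] (X 0) =
      ∑ p ∈ Finset.univ.filter (fun p : Fin n → Fin (n + 1) => IsIncreasingTree p),
        X 0 ^ (Finset.univ.filter fun v => Even (deg p v)).card *
          X 1 ^ (Finset.univ.filter fun v => ¬Even (deg p v)).card := by
  induction n with
  | zero =>
    simp only [Function.iterate_zero, id_eq]
    have hall : (Finset.univ.filter fun p : Fin 0 → Fin 1 => IsIncreasingTree p)
        = Finset.univ := by
      simp [Finset.filter_eq_self, IsIncreasingTree]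
    have hterm : ∀ p : Fin 0 → Fin 1,
        (X 0 ^ (Finset.univ.filter fun v => Even (deg p v)).card *
          X 1 ^ (Finset.univ.filter fun v => ¬Even (deg p v)).card
          : MvPolynomial (Fin 2) ℚ) = X 0 := by
      intro p
      have h1 : ∀ v, deg p v = 0 := fun v => by simp [deg]
      simp [h1]
    rw [hall, Finset.sum_congr rfl fun p _ => hterm p, Finset.sum_const,
      Finset.card_univ]
    simp
  | succ n ih =>
    rw [Function.iterate_succ_apply', ih, map_sum]
    -- step 1: apply D to each monomial and rewrite as a sum over parent choice
    have step : ∀ p ∈ Finset.univ.filter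
        (fun p : Fin n → Fin (n + 1) => IsIncreasingTree p),
        D (X 0 ^ (Finset.univ.filter fun v => Even (deg p v)).card *
          X 1 ^ (Finset.univ.filter fun v => ¬Even (deg p v)).card) =
        ∑ w : Fin (n + 1),
          X 0 ^ (Finset.univ.filter fun u => Even (deg (extTree p w) u)).card *
            X 1 ^ (Finset.univ.filter fun u => ¬Even (deg (extTree p w) u)).card := by
      intro p hp
      rw [Finset.mem_filter] at hp
      have hp := hp.2
      set a := (Finset.univ.filter fun v => Even (deg p v)).card with ha_def
      set b := (Finset.univ.filter fun v => ¬Even (deg p v)).card with hb_def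
      have ha : 1 ≤ a := one_le_card_even hp
      have hterm : ∀ w : Fin (n + 1),
          (X 0 ^ (Finset.univ.filter fun u => Even (deg (extTree p w) u)).card *
            X 1 ^ (Finset.univ.filter fun u => ¬Even (deg (extTree p w) u)).card
            : MvPolynomial (Fin 2) ℚ) =
          if Even (deg p w) then X 0 ^ a * X 1 ^ (b + 1)
          else X 0 ^ (a + 2) * X 1 ^ (b - 1) := by
        intro w
        have hce := card_even_extTree p w
        have hco := card_odd_extTree p w
        by_cases hw : Even (deg p w)
        · rw [if_pos hw] at hce ⊢
          rw [if_pos hw, if_pos hw] at hco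
          have : (Finset.univ.filter fun u => ¬Even (deg (extTree p w) u)).card
              = b + 1 := by omega
          rw [hce, this]
        · rw [if_neg hw] at hce ⊢
          rw [if_neg hw, if_neg hw] at hco
          have hb1 : 1 ≤ b := by
            rw [hb_def, Nat.one_le_iff_ne_zero, ← Nat.pos_iff_ne_zero,
              Finset.card_pos]
            exact ⟨w, Finset.mem_filter.mpr ⟨Finset.mem_univ w, hw⟩⟩
          have : (Finset.univ.filter fun u => ¬Even (deg (extTree p w) u)).card
              = b - 1 := by omega
          rw [hce, this]
      rw [Finset.sum_congr rfl fun w _ => hterm w, Finset.sum_ite,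
        Finset.sum_const, Finset.sum_const, D_mono D hx hy a b ha, ha_def, hb_def]
    rw [Finset.sum_congr rfl step]
    -- step 2: reindex the double sum as a sum over trees on [n+1]
    rw [← Finset.sum_product'
      (Finset.univ.filter fun p : Fin n → Fin (n + 1) => IsIncreasingTree p)
      Finset.univ
      (fun p w =>
        X 0 ^ (Finset.univ.filter fun u => Even (deg (extTree p w) u)).card *
          X 1 ^ (Finset.univ.filter fun u => ¬Even (deg (extTree p w) u)).card)]
    refine Finset.sum_nbij' (fun q => extTree q.1 q.2)
      (fun p' => (shrinkTree p', lastParent p')) ?_ ?_ ?_ ?_ ?_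
    · rintro ⟨p, w⟩ hq
      simp only [Finset.mem_product, Finset.mem_filter, Finset.mem_univ,
        true_and] at hq ⊢
      exact extTree_inc hq.1 w
    · intro p' hp'
      simp only [Finset.mem_filter, Finset.mem_univ, true_and] at hp'
      simp only [Finset.mem_product, Finset.mem_filter, Finset.mem_univ, true_and,
        and_true]
      exact shrink_inc hp'
    · rintro ⟨p, w⟩ _
      simp [shrink_extTree, lastParent_extTree]
    · intro p' hp'
      simp only [Finset.mem_filter, Finset.mem_univ, true_and] at hp'
      exact extTree_shrink hp'
    · rintro ⟨p, w⟩ _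
      rfl
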